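/- Let A₀, A₁ ⊆ ℕ with A₀ ∪ A₁ = ℕ, and suppose f : [ℕ]² → Bool is a function such that for every x and i ∈ {0,1}: if f(x,y) = i for infinitely many y, then x ∈ A_i. Construct Σ = { σ_y : |σ_y| = y and σ_y(x) = f(x,y) for x < y }. If H is an infinite set homogeneous for a path through T_Σ with color c, then H ⊆ A_c. -/

import Mathlib

/-- The initial segment of length `n` of an infinite binary sequence `p`. -/
def initSeg (p : ℕ → Bool) (n : ℕ) : List Bool := (List.range n).map p

/-- A tree of finite binary strings: a set closed under initial segments. -/
def IsTree (T : Set (List Bool)) : Prop := ∀ σ ∈ T, ∀ τ : List Bool, τ <+: σ → τ ∈ T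

/-- `H` is homogeneous for the string `σ` with color `c`. -/
def HomogFor (H : Set ℕ) (c : Bool) (σ : List Bool) : Prop :=
  ∀ x ∈ H, x < σ.length → σ.getD x false = c

/-- `H` is homogeneous (with color `c`) for arbitrarily long strings of `T`. -/
def HomogPathC (H : Set ℕ) (c : Bool) (T : Set (List Bool)) : Prop :=
  ∀ t : ℕ, ∃ σ ∈ T, t ≤ σ.length ∧ HomogFor H c σ
/-- The downward closure of a set of strings under initial segments. -/
def DC (S : Set (List Bool)) : Set (List Bool) := {τ | ∃ σ ∈ S, τ <+: σ}

/-- Core of Yokoyama's proof: `A false ∪ A true = ℕ`, and `f` detects membership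
in the limit (if `f x y = i` for infinitely many `y` then `x ∈ A i`).  If `H` is
infinite and homogeneous for a path through `T_Σ` with color `c`, where
`Σ = {σ_y : |σ_y| = y, σ_y x = f x y}`, then `H ⊆ A c`. -/
theorem stmt8 (A : Bool → Set ℕ) (hcov : A false ∪ A true = Set.univ)
    (f : ℕ → ℕ → Bool)
    (hlim : ∀ x (i : Bool), {y | f x y = i}.Infinite → x ∈ A i)
    (σs : ℕ → List Bool) (hlen : ∀ y, (σs y).length = y)
    (hσ : ∀ y, ∀ x < y, (σs y).getD x false = f x y)
    (H : Set ℕ) (hH : H.Infinite) (c : Bool)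
    (hhom : HomogPathC H c (DC (Set.range σs))) :
    H ⊆ A c := by
  intro x hx
  apply hlim x c
  apply Set.infinite_of_forall_exists_gt
  intro t
  obtain ⟨σ, ⟨τ, hτ, hpre⟩, hlenσ, hhomσ⟩ := hhom (max (x + 1) (t + 1))
  obtain ⟨y, rfl⟩ := hτ
  have hxσ : x < σ.length := lt_of_lt_of_le (Nat.lt_of_succ_le (le_max_left _ _)) hlenσ
  have hly := hpre.length_le
  rw [hlen y] at hly
  refine ⟨y, ?_, ?_⟩
  · show f x y = c
    obtain ⟨rest, hrest⟩ := hpre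
    rw [← hσ y x (lt_of_lt_of_le hxσ hly), ← hrest, List.getD_append _ _ _ _ hxσ]
    exact hhomσ x hx hxσ
  · exact lt_of_lt_of_le (lt_of_lt_of_le (Nat.lt_succ_self t) (le_max_right (x+1) (t+1))) (le_trans hlenσ hly)
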